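/- arXiv:1702.00120 — 2 statements merged into one kernel-verified Lean document; each statement's English description precedes it below -/
import Mathlib

section
/- Let k be an algebraically closed field of characteristic 0 and V^• = ⊕_{i=0}^m V^i a graded k-vector space with dim V^i = n_i. For every r ∈ R, the Zariski closure of the stratum C°_r(V^•) = { D ∈ C(V^•) : rk D_i = r_{i+1} ∀i } inside the affine space ∏_i Hom(V^i, V^{i+1}) is C_r(V^•) = { D ∈ C(V^•) : rk D_i ≤ r_{i+1} ∀i }; equivalently, the zero locus of the vanishing ideal of C°_r(V^•) equals C_r(V^•). -/
set_option maxHeartbeats 1000000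
set_option synthInstance.maxHeartbeats 200000

/-!
STATEMENT 15: Over an algebraically closed field k of characteristic 0, for r ∈ R the
Zariski closure of the stratum C°_r(V^•) = {D : rk D_i = r_{i+1} ∀i} inside the affine
space ∏_i Hom(V^i, V^{i+1}) is C_r(V^•) = {D ∈ C(V^•) : rk D_i ≤ r_{i+1} ∀i}: the common
zero locus of all polynomial functions vanishing on C°_r(V^•) equals C_r(V^•).

The affine space is modeled by collections of matrices D_i ∈ Mat_{n_{i+1} × n_i}(k),
and polynomial functions by multivariate polynomials in the matrix entries.
-/

open Module Submodule

namespace Stmt15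

variable {k : Type*} [Field k]

/-- Rectangular submatrix rank bound. -/
lemma rank_submatrix_le' {a b c d : Type*} [Fintype a] [Fintype b] [Fintype c] [Fintype d]
    [DecidableEq a] [DecidableEq b]
    (M : Matrix a b k) (f : c → a) (g : d → b) :
    (M.submatrix f g).rank ≤ M.rank := by
  have h1 : M.submatrix f g = (M.submatrix f _root_.id) *
      ((1 : Matrix b b k).submatrix _root_.id g) := by
    ext i j
    simp [Matrix.mul_apply, Matrix.one_apply]
  have h2 : M.submatrix f _root_.id = ((1 : Matrix a a k).submatrix f _root_.id) * M := by
    ext i j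
    simp [Matrix.mul_apply, Matrix.one_apply]
  calc (M.submatrix f g).rank ≤ (M.submatrix f _root_.id).rank := by
        rw [h1]; exact Matrix.rank_mul_le_left _ _
    _ ≤ M.rank := by rw [h2]; exact Matrix.rank_mul_le_right _ _

lemma det_submatrix_eq_zero {a b : Type*} [Fintype a] [Fintype b] [DecidableEq a] [DecidableEq b]
    {d : ℕ} (M : Matrix a b k) (h : M.rank < d) (fr : Fin d → a) (fc : Fin d → b) :
    (M.submatrix fr fc).det = 0 := by
  by_contra hdet
  have hu : IsUnit (M.submatrix fr fc) :=
    (Matrix.isUnit_iff_isUnit_det _).mpr (isUnit_iff_ne_zero.mpr hdet)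
  have := Matrix.rank_of_isUnit _ hu
  have hle := rank_submatrix_le' M fr fc
  rw [this, Fintype.card_fin] at hle
  omega

/-- Extraction of `d` linearly independent columns. -/
lemma exists_indep_cols {a b : Type*} [Fintype a] [Fintype b]
    {d : ℕ} (M : Matrix a b k) (h : d ≤ M.rank) :
    ∃ g : Fin d → b, LinearIndependent k (fun j => M.transpose (g j)) := by
  classical
  obtain ⟨s, hsub, hspan, hind⟩ := exists_linearIndependent k (Set.range M.transpose)
  have hsfin : s.Finite := (Set.finite_range M.transpose).subset hsub
  haveI : Fintype s := hsfin.fintype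
  have hcard : finrank k (span k s) = s.toFinset.card := by
    rw [finrank_span_set_eq_card hind, Set.toFinset_card]
  have hrk : M.rank = finrank k (span k s) := by
    rw [Matrix.rank_eq_finrank_span_cols, hspan]; rfl
  have hd : d ≤ Fintype.card s := by
    rw [← Set.toFinset_card]; omega
  let emb : Fin d ↪ s :=
    (Fin.castLEEmb (by simpa using hd)).trans (Fintype.equivFin s).symm.toEmbedding
  have hv : LinearIndependent k (fun j : Fin d => ((emb j : s) : a → k)) :=
    hind.comp emb emb.injective
  have hmem : ∀ j : Fin d, ((emb j : s) : a → k) ∈ Set.range M.transpose :=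
    fun j => hsub (emb j).2
  choose g hg using hmem
  refine ⟨g, ?_⟩
  have : (fun j => M.transpose (g j)) = fun j : Fin d => ((emb j : s) : a → k) := by
    funext j; exact hg j
  rw [this]
  exact hv


lemma rank_le_of_minors {a b : Type*} [Fintype a] [Fintype b] [DecidableEq a] [DecidableEq b]
    {ρ : ℕ} (M : Matrix a b k)
    (h : ∀ (fr : Fin (ρ+1) → a) (fc : Fin (ρ+1) → b), (M.submatrix fr fc).det = 0) :
    M.rank ≤ ρ := by
  by_contra hlt
  push_neg at hlt
  obtain ⟨g, hg⟩ := exists_indep_cols M hlt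
  set Q : Matrix a (Fin (ρ+1)) k := M.submatrix _root_.id g with hQ
  have hQt : Q.transpose = fun j => M.transpose (g j) := by
    ext j i; rfl
  have hQtrank : Q.transpose.rank = ρ + 1 := by
    have := LinearIndependent.rank_matrix (M := Q.transpose) (by rw [hQt]; exact hg)
    simpa using this
  obtain ⟨f, hf⟩ := exists_indep_cols Q.transpose (le_of_eq hQtrank.symm)
  have hrows : LinearIndependent k (fun i : Fin (ρ+1) => fun j => M (f i) (g j)) := by
    have : (fun i : Fin (ρ+1) => Q.transpose.transpose (f i)) =
        (fun i : Fin (ρ+1) => fun j => M (f i) (g j)) := rfl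
    rwa [this] at hf
  have hu : IsUnit (M.submatrix f g) := by
    rw [← Matrix.linearIndependent_rows_iff_isUnit]
    exact hrows
  have := h f g
  exact ((Matrix.isUnit_iff_isUnit_det _).mp hu).ne_zero this

variable {k : Type*} [Field k] {V : Type*} [AddCommGroup V] [Module k V]

lemma exists_compl_inside (K B : Submodule k V) (h : B ≤ K) :
    ∃ H, H ≤ K ∧ Disjoint B H ∧ B ⊔ H = K := by
  obtain ⟨q, hq⟩ := Submodule.exists_isCompl (Submodule.comap K.subtype B)
  refine ⟨Submodule.map K.subtype q, Submodule.map_subtype_le _ _, ?_, ?_⟩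
  · rw [Submodule.disjoint_def]
    intro x hxB hxq
    obtain ⟨y, hy, rfl⟩ := hxq
    have : y ∈ Submodule.comap K.subtype B := hxB
    have : y ∈ (Submodule.comap K.subtype B) ⊓ q := ⟨this, hy⟩
    rw [hq.inf_eq_bot] at this
    simp [(Submodule.mem_bot _).mp this]
  · have : Submodule.map K.subtype (Submodule.comap K.subtype B ⊔ q) = Submodule.map K.subtype ⊤ :=
      by rw [hq.sup_eq_top]
    rw [Submodule.map_sup, Submodule.map_comap_subtype, inf_eq_right.mpr h,
      Submodule.map_subtype_top] at this
    exact this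

variable [FiniteDimensional k V]

lemma disjoint_of_finrank_add_le {S X : Submodule k V}
    (h : finrank k S + finrank k X ≤ finrank k ↥(S ⊔ X)) : Disjoint S X := by
  have key := Submodule.finrank_sup_add_finrank_inf_eq S X
  have : finrank k ↥(S ⊓ X) = 0 := by omega
  rw [disjoint_iff]
  exact Submodule.finrank_eq_zero.mp this

lemma finrank_sup_of_disjoint {S X : Submodule k V} (h : Disjoint S X) :
    finrank k ↥(S ⊔ X) = finrank k S + finrank k X := by
  have key := Submodule.finrank_sup_add_finrank_inf_eq S X
  rw [disjoint_iff.mp h, finrank_bot] at key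
  omega

lemma finrank_sup_le (S X : Submodule k V) :
    finrank k ↥(S ⊔ X) ≤ finrank k S + finrank k X := by
  have key := Submodule.finrank_sup_add_finrank_inf_eq S X
  omega

lemma exists_submodule_finrank_eq {d : ℕ} (h : d ≤ finrank k V) :
    ∃ S : Submodule k V, finrank k S = d := by
  let b := finBasis k V
  let v : Fin d → V := fun j => b (Fin.castLE h j)
  have hv : LinearIndependent k v :=
    b.linearIndependent.comp _ (Fin.castLE_injective h)
  exact ⟨span k (Set.range v), by rw [finrank_span_eq_card hv, Fintype.card_fin]⟩

lemma exists_submodule_finrank_eq_le (H : Submodule k V) {d : ℕ} (h : d ≤ finrank k H) :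
    ∃ S : Submodule k V, S ≤ H ∧ finrank k S = d := by
  obtain ⟨S', hS'⟩ := exists_submodule_finrank_eq (V := ↥H) h
  refine ⟨Submodule.map H.subtype S', Submodule.map_subtype_le _ _, ?_⟩
  rw [Submodule.finrank_map_subtype_eq]
  exact hS'

lemma exists_disjoint_pair (H : Submodule k V) {d₁ d₂ : ℕ} (h : d₁ + d₂ ≤ finrank k H) :
    ∃ S T : Submodule k V, S ≤ H ∧ T ≤ H ∧ Disjoint S T ∧
      finrank k S = d₁ ∧ finrank k T = d₂ := by
  obtain ⟨S, hSH, hSd⟩ := exists_submodule_finrank_eq_le H (d := d₁) (by omega)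
  obtain ⟨X, hXH, hdisj, hsup⟩ := exists_compl_inside H S hSH
  have hX : d₂ ≤ finrank k X := by
    have := finrank_sup_of_disjoint hdisj
    rw [hsup] at this
    omega
  obtain ⟨T, hTX, hTd⟩ := exists_submodule_finrank_eq_le X hX
  exact ⟨S, T, hSH, hTX.trans hXH, hdisj.mono_right hTX, hSd, hTd⟩

lemma exists_compl_between {S T H : Submodule k V} (hS : S ≤ H) (hT : T ≤ H)
    (hd : Disjoint S T) :
    ∃ X, T ≤ X ∧ X ≤ H ∧ Disjoint S X ∧ S ⊔ X = H := by
  obtain ⟨Y, hYH, hdisj, hsup⟩ := exists_compl_inside H (S ⊔ T) (sup_le hS hT)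
  refine ⟨T ⊔ Y, le_sup_left, sup_le hT hYH, ?_, by rw [← sup_assoc, hsup]⟩
  apply disjoint_of_finrank_add_le
  have h1 : finrank k ↥(S ⊔ (T ⊔ Y)) = finrank k H := by rw [← sup_assoc, hsup]
  have h2 : finrank k ↥((S ⊔ T) ⊔ Y) = finrank k ↥(S ⊔ T) + finrank k Y :=
    finrank_sup_of_disjoint hdisj
  have h3 : finrank k ↥(S ⊔ T) = finrank k S + finrank k T := finrank_sup_of_disjoint hd
  have h4 := finrank_sup_le T Y
  rw [hsup] at h2
  omega

variable {k : Type*} [Field k] {V : Type*} [AddCommGroup V] [Module k V]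

lemma exists_perturbation (n r : ℕ → ℕ)
    (hnr : ∀ i, r i + r (i + 1) ≤ n i) (hr0 : r 0 = 0)
    (f : ∀ i, ((Fin (n i) → k) →ₗ[k] (Fin (n (i + 1)) → k)))
    (hc : ∀ i, (f (i + 1)).comp (f i) = 0)
    (hrk : ∀ i, finrank k (LinearMap.range (f i)) ≤ r (i + 1)) :
    ∃ e : ∀ i, ((Fin (n i) → k) →ₗ[k] (Fin (n (i + 1)) → k)),
      (∀ i, (f (i + 1)).comp (e i) = 0) ∧ (∀ i, (e (i + 1)).comp (f i) = 0) ∧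
      (∀ i, (e (i + 1)).comp (e i) = 0) ∧
      ∀ t : k, t ≠ 0 → ∀ i, finrank k (LinearMap.range (f i + t • e i)) = r (i + 1) := by
  classical
  -- dimensions
  have hW : ∀ i, finrank k (Fin (n i) → k) = n i := fun i => by
    simp [Module.finrank_fin_fun]
  set s : ℕ → ℕ := fun i => Nat.casesOn i 0 (fun j => finrank k (LinearMap.range (f j)))
    with hs_def
  have hs0 : s 0 = 0 := rfl
  have hss : ∀ j, s (j + 1) = finrank k (LinearMap.range (f j)) := fun _ => rfl
  have hsr : ∀ i, s i ≤ r i := by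
    intro i
    cases i with
    | zero => simp [hs0, hr0]
    | succ j => exact (hss j) ▸ hrk j
  -- the boundary subspaces
  let B : (i : ℕ) → Submodule k (Fin (n i) → k) := fun i =>
    match i with
    | 0 => ⊥
    | (j + 1) => LinearMap.range (f j)
  have hB0 : B 0 = ⊥ := rfl
  have hBs : ∀ j, B (j + 1) = LinearMap.range (f j) := fun _ => rfl
  have hBfin : ∀ i, finrank k (B i) = s i := by
    intro i
    cases i with
    | zero => simp [hB0, hs0, finrank_bot]
    | succ j => rw [hBs j, hss j]
  have hBK : ∀ i, B i ≤ LinearMap.ker (f i) := by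
    intro i
    cases i with
    | zero => exact bot_le
    | succ j => exact (hBs j) ▸ LinearMap.range_le_ker_iff.mpr (hc j)
  have hKdim : ∀ i, s (i + 1) + finrank k (LinearMap.ker (f i)) = n i := by
    intro i
    have := LinearMap.finrank_range_add_finrank_ker (f i)
    rw [hW i] at this
    rw [hss i]
    exact this
  -- homology complements
  have hHex : ∀ i, ∃ H, H ≤ LinearMap.ker (f i) ∧ Disjoint (B i) H ∧
      B i ⊔ H = LinearMap.ker (f i) := fun i => exists_compl_inside _ _ (hBK i)
  choose H hHK hHB hHsup using hHex
  have hHdim : ∀ i, s i + finrank k (H i) = finrank k (LinearMap.ker (f i)) := by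
    intro i
    have := finrank_sup_of_disjoint (hHB i)
    rw [hHsup i, hBfin i] at this
    omega
  -- S and T inside H
  have hSTex : ∀ i, ∃ S T : Submodule k (Fin (n i) → k), S ≤ H i ∧ T ≤ H i ∧ Disjoint S T ∧
      finrank k S = r (i + 1) - s (i + 1) ∧ finrank k T = r i - s i := by
    intro i
    apply exists_disjoint_pair
    have h1 := hKdim i
    have h2 := hHdim i
    have h3 := hnr i
    have h4 := hsr i
    have h5 := hsr (i + 1)
    omega
  choose S T hSH hTH hST hSdim hTdim using hSTex
  -- X between T and H, complement of S in H
  have hXex : ∀ i, ∃ X, T i ≤ X ∧ X ≤ H i ∧ Disjoint (S i) X ∧ S i ⊔ X = H i :=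
    fun i => exists_compl_between (hSH i) (hTH i) (hST i)
  choose X hTX hXH hSX hSXsup using hXex
  have hXdim : ∀ i, finrank k (S i) + finrank k (X i) = finrank k (H i) := by
    intro i
    have := finrank_sup_of_disjoint (hSX i)
    rw [hSXsup i] at this
    omega
  -- complement of the kernel
  have hCex : ∀ i, ∃ C, IsCompl (LinearMap.ker (f i)) C := fun i => Submodule.exists_isCompl _
  choose C hC using hCex
  have hCdim : ∀ i, finrank k (LinearMap.ker (f i)) + finrank k (C i) = n i := by
    intro i
    have := Submodule.finrank_add_eq_of_isCompl (hC i)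
    rw [hW i] at this
    exact this
  -- U
  let U : (i : ℕ) → Submodule k (Fin (n i) → k) := fun i => B i ⊔ X i ⊔ C i
  have hBU : ∀ i, B i ≤ U i := fun i => le_sup_of_le_left le_sup_left
  have hXU : ∀ i, X i ≤ U i := fun i => le_sup_of_le_left le_sup_right
  have hCU : ∀ i, C i ≤ U i := fun i => le_sup_right
  have hTU : ∀ i, T (i + 1) ≤ U (i + 1) := fun i => (hTX (i + 1)).trans (hXU (i + 1))
  have hSUsup : ∀ i, S i ⊔ U i = ⊤ := by
    intro i
    show S i ⊔ (B i ⊔ X i ⊔ C i) = ⊤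
    rw [← sup_assoc, sup_left_comm (S i) (B i) (X i), hSXsup i, hHsup i,
      codisjoint_iff.mp (hC i).codisjoint]
  have hSU : ∀ i, IsCompl (S i) (U i) := by
    intro i
    refine ⟨?_, codisjoint_iff.mpr (hSUsup i)⟩
    apply disjoint_of_finrank_add_le
    rw [hSUsup i]
    have hU1 : finrank k (U i) ≤ finrank k ↥(B i ⊔ X i) + finrank k (C i) :=
      finrank_sup_le _ _
    have hU2 : finrank k ↥(B i ⊔ X i) ≤ finrank k (B i) + finrank k (X i) :=
      finrank_sup_le _ _
    have h1 := hBfin i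
    have h2 := hXdim i
    have h3 := hHdim i
    have h4 := hKdim i
    have h5 := hCdim i
    have htop : finrank k (⊤ : Submodule k (Fin (n i) → k)) = n i := by
      rw [finrank_top, hW i]
    omega
  -- the perturbation maps
  have heex : ∃ e : ∀ i, ((Fin (n i) → k) →ₗ[k] (Fin (n (i + 1)) → k)),
      (∀ i x, e i x ∈ T (i + 1)) ∧ (∀ i x, x ∈ U i → e i x = 0) ∧
      (∀ i, ∀ y ∈ T (i + 1), ∃ x ∈ S i, e i x = y) := by
    have hfr : ∀ i, finrank k (S i) = finrank k (T (i + 1)) := by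
      intro i
      rw [hSdim i, hTdim (i + 1)]
    let φ : ∀ i, (S i) ≃ₗ[k] (T (i + 1)) := fun i => LinearEquiv.ofFinrankEq _ _ (hfr i)
    let π : ∀ i, (Fin (n i) → k) →ₗ[k] (S i) :=
      fun i => (S i).linearProjOfIsCompl (U i) (hSU i)
    refine ⟨fun i => (T (i + 1)).subtype ∘ₗ (φ i).toLinearMap ∘ₗ (π i), ?_, ?_, ?_⟩
    · intro i x
      exact ((φ i) (π i x)).2
    · intro i x hx
      have hπ : π i x = 0 := Submodule.projectionOnto_apply_of_mem_right (hSU i) hx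
      show (T (i + 1)).subtype ((φ i).toLinearMap (π i x)) = 0
      rw [hπ, map_zero, map_zero]
    · intro i y hy
      refine ⟨((φ i).symm ⟨y, hy⟩ : S i), ((φ i).symm ⟨y, hy⟩).2, ?_⟩
      have hπ : π i ((φ i).symm ⟨y, hy⟩ : S i) = (φ i).symm ⟨y, hy⟩ :=
        Submodule.linearProjOfIsCompl_apply_left (hSU i) _
      show (T (i + 1)).subtype ((φ i).toLinearMap (π i ((φ i).symm ⟨y, hy⟩ : S i))) = y
      rw [hπ]
      show ((φ i) ((φ i).symm ⟨y, hy⟩) : Fin (n (i + 1)) → k) = y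
      rw [(φ i).apply_symm_apply]
  obtain ⟨e, hemem, hezero, hesurj⟩ := heex
  have heT : ∀ i x, e i x ∈ T (i + 1) := hemem
  refine ⟨e, ?_, ?_, ?_, ?_⟩
  · -- f (i+1) ∘ e i = 0
    intro i
    apply LinearMap.ext
    intro x
    simp only [LinearMap.comp_apply, LinearMap.zero_apply]
    exact LinearMap.mem_ker.mp (hHK (i + 1) (hTH (i + 1) (heT i x)))
  · -- e (i+1) ∘ f i = 0
    intro i
    apply LinearMap.ext
    intro x
    simp only [LinearMap.comp_apply, LinearMap.zero_apply]
    have hmem : f i x ∈ U (i + 1) := hBU (i + 1) ((hBs i) ▸ LinearMap.mem_range_self (f i) x)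
    exact hezero (i + 1) _ hmem
  · -- e (i+1) ∘ e i = 0
    intro i
    apply LinearMap.ext
    intro x
    simp only [LinearMap.comp_apply, LinearMap.zero_apply]
    exact hezero (i + 1) _ (hTU i (heT i x))
  · -- ranks
    intro t ht i
    set g : (Fin (n i) → k) →ₗ[k] (Fin (n (i + 1)) → k) := f i + t • e i with hg
    have hgapp : ∀ x, g x = f i x + t • e i x := fun x => rfl
    -- kernel bound
    have hker : B i ⊔ X i ≤ LinearMap.ker g := by
      apply sup_le
      · intro x hx
        rw [LinearMap.mem_ker, hgapp, LinearMap.mem_ker.mp (hBK i hx),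
          hezero i x (hBU i hx)]
        simp
      · intro x hx
        rw [LinearMap.mem_ker, hgapp,
          LinearMap.mem_ker.mp (hHK i (hXH i hx)), hezero i x (hXU i hx)]
        simp
    -- range bound
    have hrange : B (i + 1) ⊔ T (i + 1) ≤ LinearMap.range g := by
      apply sup_le
      · rw [hBs i]
        rintro y ⟨x, rfl⟩
        have hxtop : x ∈ LinearMap.ker (f i) ⊔ C i := by
          rw [codisjoint_iff.mp (hC i).codisjoint]; trivial
        obtain ⟨u, hu, v, hv, rfl⟩ := Submodule.mem_sup.mp hxtop
        refine ⟨v, ?_⟩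
        rw [hgapp, hezero i v (hCU i hv)]
        rw [map_add, LinearMap.mem_ker.mp hu]
        simp
      · intro y hy
        obtain ⟨x, hxS, hxe⟩ := hesurj i y hy
        refine ⟨t⁻¹ • x, ?_⟩
        rw [hgapp, map_smul, map_smul, LinearMap.mem_ker.mp (hHK i (hSH i hxS)), hxe,
          smul_smul, mul_inv_cancel₀ ht, one_smul, smul_zero, zero_add]
    -- dimension count
    have hd1 : finrank k (B i) + finrank k (X i) ≤ finrank k (LinearMap.ker g) := by
      have := finrank_sup_of_disjoint ((hHB i).mono_right (hXH i))
      rw [← this]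
      exact Submodule.finrank_mono hker
    have hd2 : finrank k (B (i + 1)) + finrank k (T (i + 1)) ≤
        finrank k (LinearMap.range g) := by
      have := finrank_sup_of_disjoint ((hHB (i + 1)).mono_right (hTH (i + 1)))
      rw [← this]
      exact Submodule.finrank_mono hrange
    have hrn : finrank k (LinearMap.range g) + finrank k (LinearMap.ker g) = n i := by
      have := LinearMap.finrank_range_add_finrank_ker g
      rw [hW i] at this
      exact this
    have h1 := hBfin i
    have h2 := hBfin (i + 1)
    have h3 := hXdim i
    have h4 := hHdim i
    have h5 := hKdim i
    have h6 := hSdim i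
    have h7 := hTdim (i + 1)
    have h8 := hsr (i + 1)
    omega

end Stmt15

/-- Membership in the set R. -/
def memR (m : ℕ) (n r : ℕ → ℕ) : Prop :=
  r 0 = 0 ∧ (∀ i, i > m → r i = 0) ∧ ∀ i ≤ m, r i + r (i + 1) ≤ n i

theorem stmt_15
    (k : Type*) [Field k] [IsAlgClosed k] [CharZero k]
    (m : ℕ) (n : ℕ → ℕ) (hn : ∀ i, i > m → n i = 0)
    (r : ℕ → ℕ) (hr : memR m n r) :
    {D : ∀ i : ℕ, Matrix (Fin (n (i + 1))) (Fin (n i)) k |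
        ∀ p : MvPolynomial ((i : ℕ) × (Fin (n (i + 1)) × Fin (n i))) k,
          (∀ E : ∀ i : ℕ, Matrix (Fin (n (i + 1))) (Fin (n i)) k,
            ((∀ i, E (i + 1) * E i = 0) ∧ (∀ i, (E i).rank = r (i + 1))) →
            MvPolynomial.eval (fun v => E v.1 v.2.1 v.2.2) p = 0) →
          MvPolynomial.eval (fun v => D v.1 v.2.1 v.2.2) p = 0} =
    {D : ∀ i : ℕ, Matrix (Fin (n (i + 1))) (Fin (n i)) k |
        (∀ i, D (i + 1) * D i = 0) ∧ ∀ i, (D i).rank ≤ r (i + 1)} := by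
  classical
  obtain ⟨hr0, hrtop, hrsum⟩ := hr
  have hnr : ∀ i, r i + r (i + 1) ≤ n i := by
    intro i
    rcases le_or_gt i m with h | h
    · exact hrsum i h
    · rw [hrtop i h, hrtop (i + 1) (by omega), hn i h]
  ext D
  simp only [Set.mem_setOf_eq]
  constructor
  · -- D in Zariski closure → D ∈ C_r
    intro hD
    constructor
    · -- complex condition
      intro i
      ext a b
      rw [Matrix.zero_apply]
      have h := hD (∑ c : Fin (n (i + 1)),
          MvPolynomial.X (⟨i + 1, (a, c)⟩ : (i : ℕ) × (Fin (n (i + 1)) × Fin (n i))) *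
          MvPolynomial.X ⟨i, (c, b)⟩) ?_
      · rw [map_sum] at h
        simp only [map_mul, MvPolynomial.eval_X] at h
        rw [Matrix.mul_apply]
        exact h
      · intro E hE
        rw [map_sum]
        simp only [map_mul, MvPolynomial.eval_X]
        have : ∑ c : Fin (n (i + 1)), E (i + 1) a c * E i c b = (E (i + 1) * E i) a b :=
          (Matrix.mul_apply).symm
        rw [this, hE.1 i, Matrix.zero_apply]
    · -- rank condition
      intro i
      apply Stmt15.rank_le_of_minors
      intro fr fc
      have h := hD (Matrix.det
          (Matrix.of fun a b : Fin (r (i + 1) + 1) =>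
            MvPolynomial.X (⟨i, (fr a, fc b)⟩ : (i : ℕ) × (Fin (n (i + 1)) × Fin (n i))))) ?_
      · rw [RingHom.map_det, RingHom.mapMatrix_apply] at h
        have heq : (Matrix.of fun a b : Fin (r (i + 1) + 1) =>
            MvPolynomial.X (⟨i, (fr a, fc b)⟩ : (i : ℕ) × (Fin (n (i + 1)) × Fin (n i)))).map
            (MvPolynomial.eval fun v => D v.1 v.2.1 v.2.2) = (D i).submatrix fr fc := by
          ext a b
          simp [Matrix.map_apply, MvPolynomial.eval_X]
        rw [heq] at h
        exact h
      · intro E hE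
        rw [RingHom.map_det, RingHom.mapMatrix_apply]
        have heq : (Matrix.of fun a b : Fin (r (i + 1) + 1) =>
            MvPolynomial.X (⟨i, (fr a, fc b)⟩ : (i : ℕ) × (Fin (n (i + 1)) × Fin (n i)))).map
            (MvPolynomial.eval fun v => E v.1 v.2.1 v.2.2) = (E i).submatrix fr fc := by
          ext a b
          simp [Matrix.map_apply, MvPolynomial.eval_X]
        rw [heq]
        exact Stmt15.det_submatrix_eq_zero (E i) (by rw [hE.2 i]; omega) fr fc
  · -- D ∈ C_r → D in Zariski closure
    rintro ⟨hcomp, hrank⟩ p hp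
    set f : ∀ i, ((Fin (n i) → k) →ₗ[k] (Fin (n (i + 1)) → k)) :=
      fun i => (D i).mulVecLin with hf
    have hfc : ∀ i, (f (i + 1)).comp (f i) = 0 := by
      intro i
      simp only [hf]
      rw [← Matrix.mulVecLin_mul, hcomp i, Matrix.mulVecLin_zero]
    have hfr : ∀ i, finrank k (LinearMap.range (f i)) ≤ r (i + 1) := fun i => hrank i
    obtain ⟨e, he1, he2, he3, he4⟩ := Stmt15.exists_perturbation n r hnr hr0 f hfc hfr
    set E : ∀ i, Matrix (Fin (n (i + 1))) (Fin (n i)) k :=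
      fun i => LinearMap.toMatrix' (e i) with hE
    have hEe : ∀ i, Matrix.toLin' (E i) = e i := fun i => Matrix.toLin'_toMatrix' (e i)
    -- the curve D + t E lies in the stratum for t ≠ 0
    have hcurve : ∀ t : k, t ≠ 0 →
        (∀ i, (D (i + 1) + t • E (i + 1)) * (D i + t • E i) = 0) ∧
        (∀ i, (D i + t • E i).rank = r (i + 1)) := by
      intro t ht
      have hlin : ∀ i, Matrix.toLin' (D i + t • E i) = f i + t • e i := by
        intro i
        rw [map_add, map_smul, hEe]
        congr 1
      constructor
      · intro i
        apply Matrix.toLin'.injective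
        rw [map_zero]
        show Matrix.toLin' ((D (i + 1) + t • E (i + 1)) * (D i + t • E i)) = 0
        have : Matrix.toLin' ((D (i + 1) + t • E (i + 1)) * (D i + t • E i)) =
            (Matrix.toLin' (D (i + 1) + t • E (i + 1))).comp
              (Matrix.toLin' (D i + t • E i)) := Matrix.mulVecLin_mul _ _
        rw [this, hlin, hlin]
        rw [LinearMap.add_comp, LinearMap.comp_add, LinearMap.comp_add,
          LinearMap.smul_comp, LinearMap.comp_smul, LinearMap.comp_smul,
          LinearMap.smul_comp]
        rw [hfc i, he1 i, he2 i, he3 i]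
        simp
      · intro i
        show finrank k (LinearMap.range (D i + t • E i).mulVecLin) = r (i + 1)
        have : (D i + t • E i).mulVecLin = f i + t • e i := hlin i
        rw [this]
        exact he4 t ht i
    -- polynomial in t
    set q : Polynomial k := MvPolynomial.eval₂ Polynomial.C
        (fun v => Polynomial.C (D v.1 v.2.1 v.2.2) + Polynomial.X * Polynomial.C (E v.1 v.2.1 v.2.2)) p
      with hq
    have hqeval : ∀ t : k, q.eval t =
        MvPolynomial.eval (fun v => (D v.1 + t • E v.1) v.2.1 v.2.2) p := by
      intro t
      have : q.eval t = (Polynomial.evalRingHom t) q := rfl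
      rw [this, hq, MvPolynomial.eval₂_comp_left (Polynomial.evalRingHom t) Polynomial.C _ p]
      have hC : (Polynomial.evalRingHom t).comp (Polynomial.C) = RingHom.id k := by
        ext a
        simp
      rw [hC, MvPolynomial.eval₂_id]
      have hfun : (⇑(Polynomial.evalRingHom t) ∘ fun v : (i : ℕ) × (Fin (n (i + 1)) × Fin (n i)) =>
          Polynomial.C (D v.1 v.2.1 v.2.2) + Polynomial.X * Polynomial.C (E v.1 v.2.1 v.2.2)) =
          fun v => (D v.1 + t • E v.1) v.2.1 v.2.2 := by
        funext v
        simp only [Function.comp_apply, Polynomial.coe_evalRingHom, Polynomial.eval_add,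
          Polynomial.eval_mul, Polynomial.eval_C, Polynomial.eval_X, Matrix.add_apply,
          Matrix.smul_apply, smul_eq_mul]
      rw [hfun]
    have hroots : ∀ t : k, t ≠ 0 → q.eval t = 0 := by
      intro t ht
      rw [hqeval t]
      exact hp (fun i => D i + t • E i) ⟨(hcurve t ht).1, (hcurve t ht).2⟩
    have hq0 : q = 0 := by
      apply Polynomial.eq_zero_of_infinite_isRoot
      apply Set.Infinite.mono (s := {t : k | t ≠ 0})
      · intro t ht
        exact hroots t ht
      · have : ({t : k | t ≠ 0} : Set k) = {(0 : k)}ᶜ := by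
          ext t; simp
        rw [this]
        exact (Set.finite_singleton 0).infinite_compl
    have := hqeval 0
    rw [hq0] at this
    simp only [Polynomial.eval_zero, zero_smul, add_zero] at this
    exact this.symm
end

section
/- Let k be a field and V^• = ⊕_{i=0}^m V^i a graded k-vector space with dim V^i = n_i. A vector r ∈ R is a maximal element of the poset R if and only if for every differential D ∈ C(V^•) with rk D_i = r_{i+1} for all i, the graded cohomology space H^•_D(V^•) is sparse, i.e., dim H^i_D(V^•) · dim H^{i+1}_D(V^•) = 0 for every i. Equivalently, r is maximal in R if and only if (n_i − r_i − r_{i+1})(n_{i+1} − r_{i+1} − r_{i+2}) = 0 for every i. -/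
section

variable {k : Type*} [Field k] {V : ℕ → Type*}
variable [∀ i, AddCommGroup (V i)] [∀ i, Module k (V i)]

/-- dim H^j for a complex (V^•, D) concentrated in nonnegative degrees:
H^0 = Ker D_0, H^{j+1} = Ker D_{j+1} / Im D_j. -/
noncomputable def hdim (D : ∀ i, V i →ₗ[k] V (i + 1)) : ℕ → ℕ
  | 0 => Module.finrank k ↥(LinearMap.ker (D 0))
  | (j + 1) => Module.finrank k
      (↥(LinearMap.ker (D (j + 1))) ⧸
        (LinearMap.range (D j)).comap (LinearMap.ker (D (j + 1))).subtype)

end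

theorem stmt_16
    (k : Type*) [Field k] (m : ℕ)
    (V : ℕ → Type*) [∀ i, AddCommGroup (V i)] [∀ i, Module k (V i)]
    [∀ i, FiniteDimensional k (V i)]
    (hVtriv : ∀ i, i > m → Subsingleton (V i))
    (n : ℕ → ℕ) (hn : ∀ i, n i = Module.finrank k (V i))
    (r : ℕ → ℕ) (hr : memR m n r) :
    -- r is maximal in R iff every differential with rank vector r has sparse cohomology
    ((∀ s, memR m n s → (∀ i, r i ≤ s i) → s = r) ↔
      (∀ D : ∀ i, V i →ₗ[k] V (i + 1), (∀ i, (D (i + 1)).comp (D i) = 0) →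
        (∀ i, Module.finrank k ↥(LinearMap.range (D i)) = r (i + 1)) →
        ∀ i, hdim D i * hdim D (i + 1) = 0)) ∧
    -- equivalently, iff (n_i − r_i − r_{i+1})·(n_{i+1} − r_{i+1} − r_{i+2}) = 0 for all i
    ((∀ s, memR m n s → (∀ i, r i ≤ s i) → s = r) ↔
      (∀ i, (n i - r i - r (i + 1)) * (n (i + 1) - r (i + 1) - r (i + 2)) = 0)) := by
  classical
  obtain ⟨hr0, hrm, hrle⟩ := hr
  have hn0 : ∀ i, i > m → n i = 0 := fun i hi => by
    haveI := hVtriv i hi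
    rw [hn i, Module.finrank_zero_of_subsingleton]
  -- the combinatorial equivalence
  have keyNum : (∀ s, memR m n s → (∀ i, r i ≤ s i) → s = r) ↔
      (∀ i, (n i - r i - r (i + 1)) * (n (i + 1) - r (i + 1) - r (i + 2)) = 0) := by
    constructor
    · intro hmax i
      by_contra hcon
      have h1 : r i + r (i + 1) < n i := by
        rcases Nat.mul_ne_zero_iff.mp hcon with ⟨a, _⟩; omega
      have h2 : r (i + 1) + r (i + 2) < n (i + 1) := by
        rcases Nat.mul_ne_zero_iff.mp hcon with ⟨_, a⟩; omega
      have him : i + 1 ≤ m := by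
        by_contra hgt
        have := hn0 (i + 1) (by omega)
        have := hrm (i + 1) (by omega)
        have := hrm (i + 2) (by omega)
        omega
      set s : ℕ → ℕ := fun j => if j = i + 1 then r (i + 1) + 1 else r j with hs
      have hsR : memR m n s := by
        refine ⟨?_, fun j hj => ?_, fun j hj => ?_⟩
        · simp only [hs]
          rw [if_neg (by omega)]
          exact hr0
        · have hne : j ≠ i + 1 := by omega
          simp only [hs]
          rw [if_neg hne]
          exact hrm j hj
        · by_cases hji : j = i
          · rw [hji]
            have e1 : s i = r i := by
              simp only [hs]; rw [if_neg (by omega)]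
            have e2 : s (i + 1) = r (i + 1) + 1 := by simp [hs]
            rw [e1, e2]; omega
          · by_cases hji1 : j = i + 1
            · rw [hji1]
              have e1 : s (i + 1) = r (i + 1) + 1 := by simp [hs]
              have e2 : s (i + 1 + 1) = r (i + 1 + 1) := by
                simp only [hs]; rw [if_neg (by omega)]
              have e3 : r (i + 1 + 1) = r (i + 2) := rfl
              rw [e1, e2]; omega
            · have e1 : s j = r j := by
                simp only [hs]; rw [if_neg hji1]
              have e2 : s (j + 1) = r (j + 1) := by
                simp only [hs]; rw [if_neg (by omega)]
              rw [e1, e2]; exact hrle j hj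
      have hle : ∀ j, r j ≤ s j := by
        intro j; by_cases hj : j = i + 1 <;> simp [hs, hj]
      have heq := congrFun (hmax s hsR hle) (i + 1)
      have : s (i + 1) = r (i + 1) + 1 := by simp [hs]
      omega
    · intro hnum s hsR hle
      by_contra hne
      have hex2 : ∃ j, s j ≠ r j := by
        by_contra h; push_neg at h; exact hne (funext h)
      obtain ⟨hs0, hsm, hsle⟩ := hsR
      obtain ⟨j, hjne, hjmin⟩ : ∃ j, s j ≠ r j ∧ ∀ t, t < j → s t = r t :=
        ⟨Nat.find hex2, Nat.find_spec hex2, fun t ht => not_not.mp (Nat.find_min hex2 ht)⟩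
      have hjgt : r j < s j := lt_of_le_of_ne (hle j) (Ne.symm hjne)
      have hjm : j ≤ m := by
        by_contra h; have := hsm j (by omega); omega
      have hjpos : 1 ≤ j := by
        rcases Nat.eq_zero_or_pos j with h | h
        · exfalso; apply hjne; rw [h, hs0, hr0]
        · exact h
      obtain ⟨t, rfl⟩ : ∃ t, j = t + 1 := ⟨j - 1, by omega⟩
      have hst : s t = r t := hjmin t (by omega)
      have hc1 : s t + s (t + 1) ≤ n t := hsle t (by omega)
      have hfac1 : n t - r t - r (t + 1) ≠ 0 := by omega
      have hfac2 : n (t + 1) - r (t + 1) - r (t + 2) = 0 := by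
        rcases Nat.mul_eq_zero.mp (hnum t) with h | h
        · exact absurd h hfac1
        · exact h
      have hc2 : s (t + 1) + s (t + 1 + 1) ≤ n (t + 1) := hsle (t + 1) hjm
      have h3 := hle (t + 2)
      have e : s (t + 1 + 1) = s (t + 2) := rfl
      omega
  -- rank-nullity computation of hdim
  have hdim_eq : ∀ D : ∀ i, V i →ₗ[k] V (i + 1),
      (∀ i, (D (i + 1)).comp (D i) = 0) →
      (∀ i, Module.finrank k ↥(LinearMap.range (D i)) = r (i + 1)) →
      ∀ i, hdim D i = n i - r i - r (i + 1) := by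
    intro D hD hrk i
    match i with
    | 0 =>
      have hrn := LinearMap.finrank_range_add_finrank_ker (D 0)
      rw [hrk 0, ← hn 0] at hrn
      have e : r (0 + 1) = r 1 := rfl
      show Module.finrank k ↥(LinearMap.ker (D 0)) = n 0 - r 0 - r 1
      omega
    | (j + 1) =>
      have hsub : LinearMap.range (D j) ≤ LinearMap.ker (D (j + 1)) :=
        LinearMap.range_le_ker_iff.mpr (hD j)
      set K := LinearMap.ker (D (j + 1)) with hK
      set p := (LinearMap.range (D j)).comap K.subtype with hp
      have hpeq : Module.finrank k ↥p = r (j + 1) :=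
        (LinearEquiv.finrank_eq (Submodule.comapSubtypeEquivOfLe hsub)).trans (hrk j)
      have hq : Module.finrank k (↥K ⧸ p) + Module.finrank k ↥p = Module.finrank k ↥K :=
        Submodule.finrank_quotient_add_finrank p
      have hple : Module.finrank k ↥p ≤ Module.finrank k ↥K := p.finrank_le
      have hrn : Module.finrank k ↥(LinearMap.range (D (j + 1))) + Module.finrank k ↥K =
          Module.finrank k (V (j + 1)) := LinearMap.finrank_range_add_finrank_ker (D (j + 1))
      rw [hrk (j + 1), ← hn (j + 1)] at hrn
      have e : r (j + 1 + 1) = r (j + 2) := rfl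
      show Module.finrank k (↥K ⧸ p) = n (j + 1) - r (j + 1) - r (j + 2)
      omega
  -- construction of a differential with rank vector r
  have hex : ∃ D : ∀ i, V i →ₗ[k] V (i + 1),
      (∀ i, (D (i + 1)).comp (D i) = 0) ∧
      (∀ i, Module.finrank k ↥(LinearMap.range (D i)) = r (i + 1)) := by
    set b : ∀ i, Module.Basis (Fin (n i)) k (V i) :=
      fun i => Module.finBasisOfFinrankEq k (V i) (hn i).symm with hb
    set f : ∀ i, Fin (n i) → V (i + 1) := fun i j =>
      if h : (j : ℕ) < r (i + 1) ∧ r (i + 1) + r (i + 2) ≤ n (i + 1) then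
        b (i + 1) ⟨n (i + 1) - r (i + 1) + j, by omega⟩ else 0 with hf
    set D : ∀ i, V i →ₗ[k] V (i + 1) := fun i => (b i).constr k (f i) with hDdef
    have hcond : ∀ i, r (i + 1) ≠ 0 → (i + 1 ≤ m ∧ r (i + 1) + r (i + 2) ≤ n (i + 1)
        ∧ r (i + 1) ≤ n i) := by
      intro i h
      have him : i + 1 ≤ m := by
        by_contra hgt; exact h (hrm (i + 1) (by omega))
      exact ⟨him, hrle (i + 1) him, le_trans (Nat.le_add_left _ _) (hrle i (by omega))⟩
    refine ⟨D, fun i => ?_, fun i => ?_⟩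
    · apply (b i).ext
      intro j
      rw [LinearMap.comp_apply, LinearMap.zero_apply]
      by_cases h : (j : ℕ) < r (i + 1) ∧ r (i + 1) + r (i + 2) ≤ n (i + 1)
      · have h1 : (D i) (b i j) = b (i + 1) ⟨n (i + 1) - r (i + 1) + j, by omega⟩ := by
          show ((b i).constr k (f i)) (b i j) = _
          rw [Module.Basis.constr_basis]
          simp only [hf]
          exact dif_pos h
        rw [h1]
        show ((b (i + 1)).constr k (f (i + 1))) _ = 0
        rw [Module.Basis.constr_basis]
        simp only [hf]
        refine dif_neg ?_
        rintro ⟨hc1, -⟩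
        have hc1' : n (i + 1) - r (i + 1) + (j : ℕ) < r (i + 2) := hc1
        omega
      · have h1 : (D i) (b i j) = 0 := by
          show ((b i).constr k (f i)) (b i j) = _
          rw [Module.Basis.constr_basis]
          simp only [hf]
          exact dif_neg h
        rw [h1, map_zero]
    · rcases Nat.eq_zero_or_pos (r (i + 1)) with h0 | h0
      · have hDz : D i = 0 := by
          apply (b i).ext
          intro j
          show ((b i).constr k (f i)) (b i j) = 0
          rw [Module.Basis.constr_basis]
          simp only [hf]
          rw [dif_neg (by omega)]
        rw [hDz, LinearMap.range_zero, h0, finrank_bot]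
      · obtain ⟨_, hc2, hc3⟩ := hcond i (by omega)
        set g : Fin (r (i + 1)) → V (i + 1) := fun t =>
          b (i + 1) ⟨n (i + 1) - r (i + 1) + t, by omega⟩ with hg
        have hrange : LinearMap.range (D i) = Submodule.span k (Set.range g) := by
          show LinearMap.range ((b i).constr k (f i)) = _
          rw [Module.Basis.constr_range]
          apply le_antisymm
          · rw [Submodule.span_le]
            rintro x ⟨j, rfl⟩
            simp only [hf]
            by_cases h : (j : ℕ) < r (i + 1) ∧ r (i + 1) + r (i + 2) ≤ n (i + 1)
            · rw [dif_pos h]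
              exact Submodule.subset_span ⟨⟨j, h.1⟩, rfl⟩
            · rw [dif_neg h]; exact Submodule.zero_mem _
          · rw [Submodule.span_le]
            rintro x ⟨t, rfl⟩
            apply Submodule.subset_span
            refine ⟨⟨(t : ℕ), by omega⟩, ?_⟩
            simp only [hf, hg]
            rw [dif_pos ⟨by exact t.2, hc2⟩]
        have hind : LinearIndependent k g := by
          have hinj : Function.Injective
              (fun t : Fin (r (i + 1)) =>
                (⟨n (i + 1) - r (i + 1) + t, by omega⟩ : Fin (n (i + 1)))) := by
            intro a c hac
            have : n (i + 1) - r (i + 1) + (a : ℕ) = n (i + 1) - r (i + 1) + c :=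
              congrArg Fin.val hac
            exact Fin.ext (by omega)
          exact (b (i + 1)).linearIndependent.comp _ hinj
        rw [hrange, finrank_span_eq_card hind, Fintype.card_fin]
  obtain ⟨D₀, hD₀, hrk₀⟩ := hex
  refine ⟨?_, keyNum⟩
  rw [keyNum]
  constructor
  · intro hnum D hD hrk i
    rw [hdim_eq D hD hrk i, hdim_eq D hD hrk (i + 1)]
    exact hnum i
  · intro hsp i
    have := hsp D₀ hD₀ hrk₀ i
    rwa [hdim_eq D₀ hD₀ hrk₀ i, hdim_eq D₀ hD₀ hrk₀ (i + 1)] at this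
end
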